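/- Let X be a formal vector field (an n-tuple of elements of R acting as a derivation on R). Let G₁,…,G_s ∈ R be prime elements of R, pairwise non-associated, and let c₁,…,c_s be nonzero complex numbers such that Σ_{i=1}^s cᵢ·X(Gᵢ)·∏_{j≠i} Gⱼ = 0. Then each Gᵢ is a semi-invariant of X: Gᵢ divides X(Gᵢ) in R, for every i = 1,…,s. -/

import Mathlib

open Finset

noncomputable def psPderiv {n : ℕ} (j : Fin n) (F : MvPowerSeries (Fin n) ℂ) :
    MvPowerSeries (Fin n) ℂ :=
  fun a => ((a j + 1 : ℕ) : ℂ) * MvPowerSeries.coeff (R := ℂ) (a + Finsupp.single j 1) F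

noncomputable def vfApply {n : ℕ} (V : Fin n → MvPowerSeries (Fin n) ℂ)
    (F : MvPowerSeries (Fin n) ℂ) : MvPowerSeries (Fin n) ℂ :=
  ∑ j, V j * psPderiv j F

noncomputable def vfLie {n : ℕ} (U V : Fin n → MvPowerSeries (Fin n) ℂ) :
    Fin n → MvPowerSeries (Fin n) ℂ :=
  fun j => vfApply U (V j) - vfApply V (U j)

noncomputable def diagVF {n : ℕ} (lam : Fin n → ℂ) : Fin n → MvPowerSeries (Fin n) ℂ :=
  fun j => MvPowerSeries.C (σ := Fin n) (R := ℂ) (lam j) * MvPowerSeries.X j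

def IsPDNormalForm {n : ℕ} (lam : Fin n → ℂ) (Xf : Fin n → MvPowerSeries (Fin n) ℂ) : Prop :=
  (∀ j, MvPowerSeries.coeff (R := ℂ) 0 (Xf j) = 0) ∧
  (∃ A : Matrix (Fin n) (Fin n) ℂ, IsNilpotent A ∧
      A * Matrix.diagonal lam = Matrix.diagonal lam * A ∧
      ∀ j l, MvPowerSeries.coeff (R := ℂ) (Finsupp.single l 1) (Xf j)
        = (if l = j then lam j else 0) + A j l) ∧
  (∀ j, vfLie (diagVF lam) Xf j = 0)

/-- If `P = Π G i ^ c i` is a formal Darboux-type first integral of the formal vector field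
`X` (with `G i` prime, pairwise non-associated, `c i ≠ 0`), written here in
cleared-denominator form, then each `G i` is a semi-invariant of `X`:
`G i` divides `X(G i)`. -/
theorem factors_are_semi_invariants {n s : ℕ}
    (Xf : Fin n → MvPowerSeries (Fin n) ℂ)
    (G : Fin s → MvPowerSeries (Fin n) ℂ) (hGprime : ∀ i, Prime (G i))
    (hGassoc : ∀ i j, i ≠ j → ¬ Associated (G i) (G j))
    (c : Fin s → ℂ) (hc : ∀ i, c i ≠ 0)
    (hint : ∑ i, MvPowerSeries.C (σ := Fin n) (R := ℂ) (c i) * vfApply Xf (G i)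
        * ∏ j ∈ Finset.univ.erase i, G j = 0) :
    ∀ i, G i ∣ vfApply Xf (G i) := by
  haveI : IsDomain (MvPowerSeries (Fin n) ℂ) := NoZeroDivisors.to_isDomain _
  intro i
  have hdvd : G i ∣ MvPowerSeries.C (σ := Fin n) (R := ℂ) (c i) * vfApply Xf (G i)
      * ∏ j ∈ Finset.univ.erase i, G j := by
    have hsum : MvPowerSeries.C (σ := Fin n) (R := ℂ) (c i) * vfApply Xf (G i)
        * ∏ j ∈ Finset.univ.erase i, G j
        = - ∑ k ∈ Finset.univ.erase i, (MvPowerSeries.C (σ := Fin n) (R := ℂ) (c k) * vfApply Xf (G k)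
            * ∏ j ∈ Finset.univ.erase k, G j) := by
      have h := Finset.add_sum_erase Finset.univ
        (fun k => MvPowerSeries.C (σ := Fin n) (R := ℂ) (c k) * vfApply Xf (G k)
            * ∏ j ∈ Finset.univ.erase k, G j) (Finset.mem_univ i)
      linear_combination h + hint
    rw [hsum, dvd_neg]
    apply Finset.dvd_sum
    intro k hk
    have hik : i ∈ Finset.univ.erase k := by
      simp only [Finset.mem_erase, Finset.mem_univ, and_true] at hk ⊢
      exact fun h => hk h.symm
    exact Dvd.dvd.mul_left (Finset.dvd_prod_of_mem G hik) _
  have hCunit : IsUnit (MvPowerSeries.C (σ := Fin n) (R := ℂ) (c i)) := by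
    rw [MvPowerSeries.isUnit_iff_constantCoeff]
    simpa using (hc i).isUnit
  rcases (hGprime i).2.2 _ _ hdvd with h | h
  · rcases (hGprime i).2.2 _ _ h with h | h
    · exact absurd (isUnit_of_dvd_unit h hCunit) (hGprime i).not_unit
    · exact h
  · rcases (hGprime i).exists_mem_finset_dvd h with ⟨j, hj, hdq⟩
    have hass : Associated (G i) (G j) := by
      have h1 : Irreducible (G i) := (hGprime i).irreducible
      have h2 : Irreducible (G j) := (hGprime j).irreducible
      exact h1.associated_of_dvd h2 hdq
    exact absurd hass (hGassoc i j (fun h => (Finset.mem_erase.mp hj).1 h.symm))
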